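/- Let m, n be positive integers, let B ∈ M_m(ℂ) and C ∈ M_n(ℂ), and let A = B⊗I_n + I_m⊗C be the Kronecker sum of B and C. Then det_1(exp(A)) = exp(tr_1(A)) if and only if the m-th Hadamard power of exp(C) coincides with its m-th matrix power, i.e. (exp(C))^{(m)} = (exp(C))^m. -/

import Mathlib

open Matrix Kronecker

/-- The partial determinant `det₁`: for `A ∈ M_{mn}(F) = M_m(F) ⊗ M_n(F)`,
`det1 A` is the `n × n` matrix whose `(i,j)` entry is the determinant of the
block `A_{ij} ∈ M_m(F)` given by `(A_{ij})_{kl} = A (k,i) (l,j)`. -/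
def det1 {F : Type*} [Field F] {m n : ℕ}
    (A : Matrix (Fin m × Fin n) (Fin m × Fin n) F) : Matrix (Fin n) (Fin n) F :=
  Matrix.of fun i j => Matrix.det (Matrix.of fun k l : Fin m => A (k, i) (l, j))

/-- The `m`-th Hadamard (entrywise) power of a matrix. -/
def hpow {F : Type*} [Monoid F] {n : ℕ} (B : Matrix (Fin n) (Fin n) F) (m : ℕ) :
    Matrix (Fin n) (Fin n) F :=
  Matrix.of fun i j => (B i j) ^ m

/-- The partial trace `tr₁`: the `n × n` matrix of traces of the blocks
`A_{ij} ∈ M_m(ℂ)` given by `(A_{ij})_{kl} = A (k,i) (l,j)`. -/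
noncomputable def tr1 {m n : ℕ} (A : Matrix (Fin m × Fin n) (Fin m × Fin n) ℂ) :
    Matrix (Fin n) (Fin n) ℂ :=
  Matrix.of fun i j => ∑ k : Fin m, A (k, i) (k, j)


open NormedSpace
open scoped Kronecker

/-- Entry evaluation as an ℝ-linear map. -/
def entryLM {p : ℕ} (k l : Fin p) : Matrix (Fin p) (Fin p) ℂ →ₗ[ℝ] ℂ where
  toFun M := M k l
  map_add' _ _ := rfl
  map_smul' _ _ := rfl

theorem my_det_exp {p : ℕ} (A : Matrix (Fin p) (Fin p) ℂ) :
    (NormedSpace.exp A).det = Complex.exp A.trace := by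
  letI : SeminormedRing (Matrix (Fin p) (Fin p) ℂ) := Matrix.linftyOpSemiNormedRing
  letI : NormedRing (Matrix (Fin p) (Fin p) ℂ) := Matrix.linftyOpNormedRing
  letI : NormedAlgebra ℝ (Matrix (Fin p) (Fin p) ℂ) := Matrix.linftyOpNormedAlgebra
  letI : NormedAlgebra ℂ (Matrix (Fin p) (Fin p) ℂ) := Matrix.linftyOpNormedAlgebra
  -- derivative of u ↦ exp (u • A) at 0
  have hA0 : HasDerivAt (fun u : ℝ => exp (u • A)) A 0 := by
    have h := hasDerivAt_exp_smul_const (𝕂 := ℝ) A (0:ℝ)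
    rw [zero_smul, exp_zero, one_mul] at h
    exact h
  have hentry : ∀ k l : Fin p, HasDerivAt (fun u : ℝ => exp (u • A) k l) (A k l) 0 := by
    intro k l
    exact ((entryLM k l).toContinuousLinearMap.hasFDerivAt.comp_hasDerivAt 0 hA0)
  -- derivative of u ↦ det (exp (u • A)) at 0 is trace A
  have hprod : ∀ σ : Equiv.Perm (Fin p), HasDerivAt
      (fun u : ℝ => ∏ i, exp (u • A) (σ i) i)
      (∑ i, (∏ j ∈ Finset.univ.erase i, (1 : Matrix (Fin p) (Fin p) ℂ) (σ j) j) • A (σ i) i)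
      0 := by
    intro σ
    have h := HasDerivAt.finset_prod (u := Finset.univ)
      (f := fun i (u : ℝ) => exp (u • A) (σ i) i) (f' := fun i => A (σ i) i)
      (fun i _ => hentry (σ i) i)
    simpa [zero_smul, exp_zero, Finset.prod_fn] using h
  have hval : (∑ σ : Equiv.Perm (Fin p), ((Equiv.Perm.sign σ : ℤ) : ℂ) *
      ∑ i, (∏ j ∈ Finset.univ.erase i, (1 : Matrix (Fin p) (Fin p) ℂ) (σ j) j) • A (σ i) i)
      = A.trace := by
    rw [Finset.sum_eq_single (1 : Equiv.Perm (Fin p))]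
    · rw [Matrix.trace]
      simp only [Equiv.Perm.sign_one, Units.val_one, Int.cast_one, one_mul, Matrix.diag]
      refine Finset.sum_congr rfl fun i _ => ?_
      rw [Finset.prod_eq_one, one_smul]
      · rfl
      · intro j _
        exact Matrix.one_apply_eq j
    · intro σ _ hσ
      have key : ∀ i : Fin p, ∃ j, j ≠ i ∧ σ j ≠ j := by
        intro i
        by_contra hcon
        push_neg at hcon
        refine hσ (Equiv.ext fun j => ?_)
        show σ j = j
        by_cases hj : j = i
        · subst hj
          by_contra hii
          exact hii (σ.injective (hcon (σ j) hii))
        · exact hcon j hj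
      rw [Finset.sum_eq_zero, mul_zero]
      intro i _
      obtain ⟨j, hji, hj⟩ := key i
      have hz : (∏ j ∈ Finset.univ.erase i, (1 : Matrix (Fin p) (Fin p) ℂ) (σ j) j) = 0 :=
        Finset.prod_eq_zero (Finset.mem_erase.mpr ⟨hji, Finset.mem_univ j⟩)
          (Matrix.one_apply_ne hj)
      rw [hz, zero_smul]
    · intro h; exact absurd (Finset.mem_univ _) h
  have h0 : HasDerivAt (fun u : ℝ => (exp (u • A)).det) A.trace 0 := by
    have hsum := HasDerivAt.sum (u := Finset.univ)
      (A := fun σ (u : ℝ) => ((Equiv.Perm.sign σ : ℤ) : ℂ) * ∏ i, exp (u • A) (σ i) i)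
      (A' := fun σ => ((Equiv.Perm.sign σ : ℤ) : ℂ) *
        ∑ i, (∏ j ∈ Finset.univ.erase i, (1 : Matrix (Fin p) (Fin p) ℂ) (σ j) j) • A (σ i) i)
      (fun σ _ => (hprod σ).const_mul _)
    rw [hval] at hsum
    refine hsum.congr_of_eventuallyEq (Filter.Eventually.of_forall fun u => ?_)
    rw [Finset.sum_apply]
    exact Matrix.det_apply' _
  -- derivative at every t
  have hφ : ∀ t : ℝ, HasDerivAt (fun u : ℝ => (exp (u • A)).det)
      ((exp (t • A)).det * A.trace) t := by
    intro t
    have hsub : HasDerivAt (fun u : ℝ => u - t) 1 t := (hasDerivAt_id t).sub_const t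
    have hcomp := HasDerivAt.scomp_of_eq (x := t) (h := fun u : ℝ => u - t)
      (h0.const_mul ((exp (t • A)).det)) hsub (sub_self t).symm
    rw [one_smul] at hcomp
    refine hcomp.congr_of_eventuallyEq (Filter.Eventually.of_forall fun u => ?_)
    show (exp (u • A)).det = (exp (t • A)).det * (exp ((u - t) • A)).det
    have hsplit : u • A = t • A + (u - t) • A := by
      rw [← add_smul]; ring_nf
    rw [hsplit, Matrix.exp_add_of_commute _ _
      (((Commute.refl A).smul_left t).smul_right (u - t)), Matrix.det_mul]
  -- the quotient is constant
  have key : ∀ t : ℝ,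
      Complex.exp (-(A.trace * t)) * (exp ((t:ℝ) • A)).det = 1 := by
    have hF : ∀ t : ℝ, HasDerivAt
        (fun u : ℝ => Complex.exp (-(A.trace * u)) * (exp (u • A)).det) 0 t := by
      intro t
      have h1 : HasDerivAt (fun u : ℝ => -(A.trace * (u : ℂ))) (-A.trace) t := by
        exact (show HasDerivAt (fun u : ℝ => A.trace * (u : ℂ)) A.trace t by
          simpa using ((Complex.ofRealCLM.hasDerivAt (x := t)).const_mul A.trace)).neg
      have h2 := h1.cexp
      have h3 := h2.mul (hφ t)
      convert h3 using 1
      · rfl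
      · rfl
      · ring
    have hd : Differentiable ℝ
        (fun u : ℝ => Complex.exp (-(A.trace * u)) * (exp (u • A)).det) :=
      fun t => (hF t).differentiableAt
    intro t
    have hc := is_const_of_deriv_eq_zero hd (fun x => (hF x).deriv) t 0
    rw [hc]
    simp [Complex.exp_zero]
  have h1 := key 1
  rw [one_smul, Complex.ofReal_one, mul_one, Complex.exp_neg] at h1
  exact ((inv_mul_eq_one₀ (Complex.exp_ne_zero _)).mp h1).symm


/-- `X ↦ X ⊗ₖ 1` as an algebra homomorphism. -/
def kronLAH (m n : ℕ) :
    Matrix (Fin m) (Fin m) ℂ →ₐ[ℂ] Matrix (Fin m × Fin n) (Fin m × Fin n) ℂ where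
  toFun X := X ⊗ₖ (1 : Matrix (Fin n) (Fin n) ℂ)
  map_one' := Matrix.one_kronecker_one
  map_mul' X Y := by rw [← Matrix.mul_kronecker_mul, Matrix.one_mul]
  map_zero' := Matrix.zero_kronecker _
  map_add' X Y := Matrix.add_kronecker X Y _
  commutes' r := by
    simp [Algebra.algebraMap_eq_smul_one, Matrix.smul_kronecker, Matrix.one_kronecker_one]

/-- `Y ↦ 1 ⊗ₖ Y` as an algebra homomorphism. -/
def kronRAH (m n : ℕ) :
    Matrix (Fin n) (Fin n) ℂ →ₐ[ℂ] Matrix (Fin m × Fin n) (Fin m × Fin n) ℂ where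
  toFun Y := (1 : Matrix (Fin m) (Fin m) ℂ) ⊗ₖ Y
  map_one' := Matrix.one_kronecker_one
  map_mul' X Y := by rw [← Matrix.mul_kronecker_mul, Matrix.one_mul]
  map_zero' := Matrix.kronecker_zero _
  map_add' X Y := Matrix.kronecker_add _ X Y
  commutes' r := by
    simp [Algebra.algebraMap_eq_smul_one, Matrix.kronecker_smul, Matrix.one_kronecker_one]

theorem exp_kron_one {m n : ℕ} (B : Matrix (Fin m) (Fin m) ℂ) :
    NormedSpace.exp (B ⊗ₖ (1 : Matrix (Fin n) (Fin n) ℂ))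
      = NormedSpace.exp B ⊗ₖ (1 : Matrix (Fin n) (Fin n) ℂ) := by
  letI : SeminormedRing (Matrix (Fin m) (Fin m) ℂ) := Matrix.linftyOpSemiNormedRing
  letI : NormedRing (Matrix (Fin m) (Fin m) ℂ) := Matrix.linftyOpNormedRing
  letI : NormedAlgebra ℂ (Matrix (Fin m) (Fin m) ℂ) := Matrix.linftyOpNormedAlgebra
  letI : SeminormedRing (Matrix (Fin m × Fin n) (Fin m × Fin n) ℂ) :=
    Matrix.linftyOpSemiNormedRing
  letI : NormedRing (Matrix (Fin m × Fin n) (Fin m × Fin n) ℂ) := Matrix.linftyOpNormedRing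
  letI : NormedAlgebra ℂ (Matrix (Fin m × Fin n) (Fin m × Fin n) ℂ) :=
    Matrix.linftyOpNormedAlgebra
  letI : NormedAlgebra ℚ (Matrix (Fin m) (Fin m) ℂ) := Matrix.linftyOpNormedAlgebra
  exact (map_exp (kronLAH m n)
    ((kronLAH m n).toLinearMap.continuous_of_finiteDimensional) B).symm

theorem exp_one_kron {m n : ℕ} (C : Matrix (Fin n) (Fin n) ℂ) :
    NormedSpace.exp ((1 : Matrix (Fin m) (Fin m) ℂ) ⊗ₖ C)
      = (1 : Matrix (Fin m) (Fin m) ℂ) ⊗ₖ NormedSpace.exp C := by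
  letI : SeminormedRing (Matrix (Fin n) (Fin n) ℂ) := Matrix.linftyOpSemiNormedRing
  letI : NormedRing (Matrix (Fin n) (Fin n) ℂ) := Matrix.linftyOpNormedRing
  letI : NormedAlgebra ℂ (Matrix (Fin n) (Fin n) ℂ) := Matrix.linftyOpNormedAlgebra
  letI : SeminormedRing (Matrix (Fin m × Fin n) (Fin m × Fin n) ℂ) :=
    Matrix.linftyOpSemiNormedRing
  letI : NormedRing (Matrix (Fin m × Fin n) (Fin m × Fin n) ℂ) := Matrix.linftyOpNormedRing
  letI : NormedAlgebra ℂ (Matrix (Fin m × Fin n) (Fin m × Fin n) ℂ) :=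
    Matrix.linftyOpNormedAlgebra
  letI : NormedAlgebra ℚ (Matrix (Fin n) (Fin n) ℂ) := Matrix.linftyOpNormedAlgebra
  exact (map_exp (kronRAH m n)
    ((kronRAH m n).toLinearMap.continuous_of_finiteDimensional) C).symm

theorem exp_kron_sum {m n : ℕ} (B : Matrix (Fin m) (Fin m) ℂ) (C : Matrix (Fin n) (Fin n) ℂ) :
    NormedSpace.exp
        (B ⊗ₖ (1 : Matrix (Fin n) (Fin n) ℂ) + (1 : Matrix (Fin m) (Fin m) ℂ) ⊗ₖ C)
      = NormedSpace.exp B ⊗ₖ NormedSpace.exp C := by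
  have hcomm : Commute (B ⊗ₖ (1 : Matrix (Fin n) (Fin n) ℂ))
      ((1 : Matrix (Fin m) (Fin m) ℂ) ⊗ₖ C) := by
    show _ = _
    rw [← Matrix.mul_kronecker_mul, ← Matrix.mul_kronecker_mul, Matrix.one_mul,
      Matrix.mul_one, Matrix.one_mul, Matrix.mul_one]
  rw [Matrix.exp_add_of_commute _ _ hcomm, exp_kron_one, exp_one_kron,
    ← Matrix.mul_kronecker_mul, Matrix.mul_one, Matrix.one_mul]

/-- For the Kronecker sum `A = B ⊗ₖ Iₙ + Iₘ ⊗ₖ C`, `det₁(exp A) = exp(tr₁ A)`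
iff the `m`-th Hadamard and matrix powers of `exp C` coincide. -/
theorem det1_exp_kroneckerSum_iff {m n : ℕ} (hm : 0 < m) (hn : 0 < n)
    (B : Matrix (Fin m) (Fin m) ℂ) (C : Matrix (Fin n) (Fin n) ℂ) :
    det1 (NormedSpace.exp
        (B ⊗ₖ (1 : Matrix (Fin n) (Fin n) ℂ) + (1 : Matrix (Fin m) (Fin m) ℂ) ⊗ₖ C))
      = NormedSpace.exp
          (tr1 (B ⊗ₖ (1 : Matrix (Fin n) (Fin n) ℂ) + (1 : Matrix (Fin m) (Fin m) ℂ) ⊗ₖ C)) ↔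
      hpow (NormedSpace.exp C) m = (NormedSpace.exp C) ^ m := by
  have hL : det1 (NormedSpace.exp
        (B ⊗ₖ (1 : Matrix (Fin n) (Fin n) ℂ) + (1 : Matrix (Fin m) (Fin m) ℂ) ⊗ₖ C))
      = Complex.exp B.trace • hpow (NormedSpace.exp C) m := by
    rw [exp_kron_sum B C]
    ext i j
    have hblk : (Matrix.of fun k l : Fin m =>
        (NormedSpace.exp B ⊗ₖ NormedSpace.exp C) (k, i) (l, j))
        = NormedSpace.exp C i j • NormedSpace.exp B := by
      ext k l
      simp [Matrix.kroneckerMap_apply, mul_comm]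
    simp only [det1, Matrix.of_apply, Matrix.smul_apply, hpow, smul_eq_mul]
    rw [hblk, Matrix.det_smul, Fintype.card_fin, my_det_exp]
    ring
  have htr : tr1 (B ⊗ₖ (1 : Matrix (Fin n) (Fin n) ℂ)
        + (1 : Matrix (Fin m) (Fin m) ℂ) ⊗ₖ C)
      = B.trace • (1 : Matrix (Fin n) (Fin n) ℂ) + (m : ℂ) • C := by
    ext i j
    simp only [tr1, Matrix.of_apply, Matrix.add_apply, Matrix.kroneckerMap_apply,
      Matrix.one_apply_eq, Matrix.smul_apply, smul_eq_mul, Finset.sum_add_distrib,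
      ← Finset.sum_mul, Finset.sum_const, Finset.card_univ, Fintype.card_fin,
      nsmul_eq_mul, Matrix.trace, Matrix.diag]
    rw [Finset.sum_mul, mul_one]
  have hexptr : NormedSpace.exp (B.trace • (1 : Matrix (Fin n) (Fin n) ℂ) + (m : ℂ) • C)
      = Complex.exp B.trace • (NormedSpace.exp C ^ m) := by
    have hcomm : Commute (B.trace • (1 : Matrix (Fin n) (Fin n) ℂ)) ((m : ℂ) • C) :=
      ((Commute.one_left C).smul_left B.trace).smul_right (m : ℂ)
    rw [Matrix.exp_add_of_commute _ _ hcomm]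
    have h1 : NormedSpace.exp (B.trace • (1 : Matrix (Fin n) (Fin n) ℂ))
        = Complex.exp B.trace • (1 : Matrix (Fin n) (Fin n) ℂ) := by
      letI : SeminormedRing (Matrix (Fin n) (Fin n) ℂ) := Matrix.linftyOpSemiNormedRing
      letI : NormedRing (Matrix (Fin n) (Fin n) ℂ) := Matrix.linftyOpNormedRing
      letI : NormedAlgebra ℂ (Matrix (Fin n) (Fin n) ℂ) := Matrix.linftyOpNormedAlgebra
      rw [Complex.exp_eq_exp_ℂ]
      calc NormedSpace.exp (B.trace • (1 : Matrix (Fin n) (Fin n) ℂ))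
          = NormedSpace.exp (algebraMap ℂ (Matrix (Fin n) (Fin n) ℂ) B.trace) := by
            rw [Algebra.algebraMap_eq_smul_one]
        _ = algebraMap ℂ (Matrix (Fin n) (Fin n) ℂ) (NormedSpace.exp B.trace) :=
            (algebraMap_exp_comm B.trace).symm
        _ = NormedSpace.exp B.trace • (1 : Matrix (Fin n) (Fin n) ℂ) := by
            rw [Algebra.algebraMap_eq_smul_one]
    have h2 : NormedSpace.exp ((m : ℂ) • C) = NormedSpace.exp C ^ m := by
      rw [show ((m : ℂ) • C) = (m • C : Matrix (Fin n) (Fin n) ℂ) from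
        Nat.cast_smul_eq_nsmul ℂ m C, Matrix.exp_nsmul m C]
    rw [h1, h2, smul_mul_assoc, one_mul]
  rw [hL, htr, hexptr]
  constructor
  · intro h
    exact smul_right_injective (Matrix (Fin n) (Fin n) ℂ) (Complex.exp_ne_zero _) h
  · intro h
    rw [h]
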